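/- Let A, B, C, D ∈ ℝ^{n×n} with C = Cᵀ symmetric positive definite, B = Bᵀ symmetric positive definite, and D − Aᵀ invertible. Then det(M + zMᵀ) ≠ 0 for every z ∈ ℂ with |z| = 1; in particular the ⊤-palindromic pencil φ(z) = M + zMᵀ is regular and has no eigenvalues on the unit circle. -/

import Mathlib

open scoped Matrix
open Matrix Complex
open scoped ComplexOrder

private lemma conj_quad {n : ℕ} (P : Matrix (Fin n) (Fin n) ℂ) (a b : Fin n → ℂ) :
    star (star a ⬝ᵥ P *ᵥ b) = star b ⬝ᵥ Pᴴ *ᵥ a := by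
  simp only [dotProduct, mulVec, Finset.mul_sum, Pi.star_apply, conjTranspose_apply,
    star_sum, star_mul', star_star]
  rw [Finset.sum_comm]
  exact Finset.sum_congr rfl fun i _ => Finset.sum_congr rfl fun j _ => by ring

private lemma posDef_map' {n : ℕ} {C : Matrix (Fin n) (Fin n) ℝ} (hC : C.PosDef) :
    (C.map (Complex.ofReal ·)).PosDef := by
  have herm : (C.map (Complex.ofReal ·)).IsHermitian :=
    hC.1.map _ (fun a => (Complex.conj_ofReal a).symm)
  refine Matrix.PosDef.of_dotProduct_mulVec_pos herm fun x hx => ?_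
  set q := star x ⬝ᵥ (C.map (Complex.ofReal ·)) *ᵥ x with hq
  have him : q.im = 0 := by
    have h := conj_quad (C.map (Complex.ofReal ·)) x x
    rw [herm] at h
    have : (starRingEnd ℂ) q = q := h
    exact Complex.conj_eq_iff_im.mp this
  have hre : q.re = (fun i => (x i).re) ⬝ᵥ C *ᵥ (fun i => (x i).re)
      + (fun i => (x i).im) ⬝ᵥ C *ᵥ (fun i => (x i).im) := by
    simp only [hq, dotProduct, mulVec, map_apply, Pi.star_apply, Complex.re_sum]
    rw [← Finset.sum_add_distrib]
    refine Finset.sum_congr rfl fun i _ => ?_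
    rw [Finset.mul_sum, Complex.re_sum, Finset.mul_sum, Finset.mul_sum, ← Finset.sum_add_distrib]
    refine Finset.sum_congr rfl fun j _ => ?_
    simp [Complex.mul_re, Complex.mul_im]
  have hx' : (fun i => (x i).re) ≠ 0 ∨ (fun i => (x i).im) ≠ 0 := by
    by_contra h
    push_neg at h
    apply hx
    funext i
    have h1 := congrFun h.1 i
    have h2 := congrFun h.2 i
    simp only [Pi.zero_apply] at h1 h2 ⊢
    exact Complex.ext h1 h2
  have key : ∀ u : Fin n → ℝ, 0 ≤ u ⬝ᵥ C *ᵥ u := fun u => by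
    simpa [star_trivial] using hC.posSemidef.dotProduct_mulVec_nonneg u
  have key' : ∀ u : Fin n → ℝ, u ≠ 0 → 0 < u ⬝ᵥ C *ᵥ u := fun u hu => by
    simpa [star_trivial] using hC.dotProduct_mulVec_pos hu
  rw [Complex.lt_def]
  refine ⟨?_, him.symm⟩
  simp only [Complex.zero_re, hre]
  rcases hx' with h | h
  · exact add_pos_of_pos_of_nonneg (key' _ h) (key _)
  · exact add_pos_of_nonneg_of_pos (key _) (key' _ h)

private lemma key_inj {n : ℕ} (A B C D : Matrix (Fin n) (Fin n) ℝ)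
    (hC : C.PosDef) (hB : B.PosDef) (hDA : IsUnit (D - Aᵀ)) (z : ℂ) (hz : ‖z‖ = 1)
    (v : Fin n ⊕ Fin n → ℂ)
    (hv : (((Matrix.fromBlocks C D A (-B)).map (Complex.ofReal ·))
        + z • ((Matrix.fromBlocks C D A (-B)).map (Complex.ofReal ·))ᵀ) *ᵥ v = 0) :
    v = 0 := by
  set f : ℝ → ℂ := (Complex.ofReal ·) with hf
  set Cc := C.map f
  set Bc := B.map f
  set Dc := D.map f
  set Ac := A.map f
  set Ac' := Aᵀ.map f
  set Dc' := Dᵀ.map f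
  have hCs : Cᵀ = C := hC.1
  have hBs : Bᵀ = B := hB.1
  have hM : (Matrix.fromBlocks C D A (-B)).map f = Matrix.fromBlocks Cc Dc Ac (-Bc) := by
    ext i j
    cases i <;> cases j <;> simp [f, Matrix.fromBlocks, Matrix.map_apply, Cc, Dc, Ac, Bc]
  have hMT : (Matrix.fromBlocks Cc Dc Ac (-Bc))ᵀ = Matrix.fromBlocks Cc Ac' Dc' (-Bc) := by
    rw [Matrix.fromBlocks_transpose]
    have h1 : Ccᵀ = Cc := by rw [← Matrix.transpose_map, hCs]
    have h2 : Acᵀ = Ac' := (Matrix.transpose_map).symm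
    have h3 : Dcᵀ = Dc' := (Matrix.transpose_map).symm
    have h4 : (-Bc)ᵀ = -Bc := by rw [Matrix.transpose_neg, ← Matrix.transpose_map, hBs]
    rw [h1, h2, h3, h4]
  set x : Fin n → ℂ := v ∘ Sum.inl with hx
  set y : Fin n → ℂ := v ∘ Sum.inr with hy
  rw [hM, hMT, Matrix.fromBlocks_smul, Matrix.fromBlocks_add, Matrix.fromBlocks_mulVec] at hv
  have E1 : (Cc + z • Cc) *ᵥ x + (Dc + z • Ac') *ᵥ y = 0 :=
    funext fun i => congrFun hv (Sum.inl i)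
  have E2 : (Ac + z • Dc') *ᵥ x + (-Bc + z • (-Bc)) *ᵥ y = 0 :=
    funext fun i => congrFun hv (Sum.inr i)
  have hxy : x = 0 ∧ y = 0 := by
    by_cases hz1 : z = -1
    · subst hz1
      have hC0 : Cc + (-1 : ℂ) • Cc = 0 := by
        ext i j; simp
      have hB0 : -Bc + (-1 : ℂ) • (-Bc) = 0 := by
        ext i j; simp
      have hE1 : (Dc + (-1 : ℂ) • Ac') *ᵥ y = 0 := by
        have := E1; rw [hC0, Matrix.zero_mulVec, zero_add] at this; exact this
      have hE2 : (Ac + (-1 : ℂ) • Dc') *ᵥ x = 0 := by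
        have := E2; rw [hB0, Matrix.zero_mulVec, add_zero] at this; exact this
      have hDAc : Dc + (-1 : ℂ) • Ac' = (D - Aᵀ).map f := by
        ext i j
        simp [Dc, Ac', f, Matrix.map_apply, sub_eq_add_neg]
      have hADc : Ac + (-1 : ℂ) • Dc' = (-((D - Aᵀ)ᵀ)).map f := by
        ext i j
        simp [Ac, Dc', f, Matrix.map_apply, sub_eq_add_neg]
      have hunit : IsUnit ((D - Aᵀ).map f) := by
        have := hDA.map (Complex.ofRealHom.mapMatrix (m := Fin n))
        exact this
      have hunit2 : IsUnit ((-((D - Aᵀ)ᵀ)).map f) := by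
        have h1 : IsUnit (-((D - Aᵀ)ᵀ)) := ((Matrix.isUnit_transpose _).mpr hDA).neg
        have := h1.map (Complex.ofRealHom.mapMatrix (m := Fin n))
        exact this
      constructor
      · apply Matrix.mulVec_injective_iff_isUnit.mpr hunit2
        rw [Matrix.mulVec_zero, ← hADc]
        exact hE2
      · apply Matrix.mulVec_injective_iff_isUnit.mpr hunit
        rw [Matrix.mulVec_zero, ← hDAc]
        exact hE1
    · set qC := star x ⬝ᵥ Cc *ᵥ x with hqC
      set qB := star y ⬝ᵥ Bc *ᵥ y with hqB
      set p := star x ⬝ᵥ Dc *ᵥ y with hp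
      set r := star x ⬝ᵥ Ac' *ᵥ y with hr
      set s := star y ⬝ᵥ Ac *ᵥ x with hs
      set t := star y ⬝ᵥ Dc' *ᵥ x with ht
      have e1 : qC + z * qC + (p + z * r) = 0 := by
        have h := congrArg (fun w => star x ⬝ᵥ w) E1
        simpa only [Matrix.add_mulVec, Matrix.smul_mulVec, dotProduct_add,
          dotProduct_smul, smul_eq_mul, dotProduct_zero, ← hqC, ← hp, ← hr] using h
      have e2 : s + z * t + (-qB + z * -qB) = 0 := by
        have h := congrArg (fun w => star y ⬝ᵥ w) E2
        simpa only [Matrix.add_mulVec, Matrix.smul_mulVec, Matrix.neg_mulVec,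
          dotProduct_add, dotProduct_smul, dotProduct_neg, smul_eq_mul,
          dotProduct_zero, ← hqB, ← hs, ← ht] using h
      have hAH : Acᴴ = Ac' := by
        ext i j
        simp [Matrix.conjTranspose_apply, Ac, Ac', Matrix.map_apply, f, Complex.conj_ofReal]
      have hDH : Dc'ᴴ = Dc := by
        ext i j
        simp [Matrix.conjTranspose_apply, Dc, Dc', Matrix.map_apply, f, Complex.conj_ofReal]
      have hconj_s : star s = r := by
        have h := conj_quad Ac y x
        rw [hAH] at h
        exact h
      have hconj_t : star t = p := by
        have h := conj_quad Dc' y x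
        rw [hDH] at h
        exact h
      have hconj_qB : star qB = qB := by
        have h := conj_quad Bc y y
        rw [(posDef_map' hB).1] at h
        exact h
      have hzz : z * star z = 1 := by
        have h := Complex.mul_conj z
        rw [Complex.normSq_eq_norm_sq, hz] at h
        simpa using h
      have e2' : r + star z * p + (-qB + star z * -qB) = 0 := by
        have h := congrArg star e2
        simp only [star_add, star_mul', star_neg, hconj_s, hconj_t, hconj_qB, star_zero] at h
        linear_combination h
      have e2'' : p + z * r = qB + z * qB := by
        linear_combination z * e2' - (p - qB) * hzz
      have sum0 : qC + qB = 0 := by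
        have h1z : (1 : ℂ) + z ≠ 0 := by
          intro h
          exact hz1 (by linear_combination h)
        have hmul : (1 + z) * (qC + qB) = 0 := by linear_combination e1 - e2''
        exact (mul_eq_zero.mp hmul).resolve_left h1z
      have hCc := posDef_map' hC
      have hBc := posDef_map' hB
      constructor
      · by_contra hx0
        have h1 : 0 < qC := hCc.dotProduct_mulVec_pos hx0
        have h2 : 0 ≤ qB := hBc.posSemidef.dotProduct_mulVec_nonneg y
        have h3 : 0 < qC + qB := add_pos_of_pos_of_nonneg h1 h2
        rw [sum0] at h3
        exact lt_irrefl 0 h3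
      · by_contra hy0
        have h1 : 0 < qB := hBc.dotProduct_mulVec_pos hy0
        have h2 : 0 ≤ qC := hCc.posSemidef.dotProduct_mulVec_nonneg x
        have h3 : 0 < qC + qB := add_pos_of_nonneg_of_pos h2 h1
        rw [sum0] at h3
        exact lt_irrefl 0 h3
  funext i
  cases i with
  | inl i => exact congrFun hxy.1 i
  | inr i => exact congrFun hxy.2 i

/-- If `C = Cᵀ` and `B = Bᵀ` are real symmetric positive definite and
`D - Aᵀ` is invertible, then `det (M + z Mᵀ) ≠ 0` for every `z` on the unit circle,
where `M = [[C, D], [A, -B]]` is viewed as a complex matrix; in particular the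
⊤-palindromic pencil `φ(z) = M + z Mᵀ` is regular and has no eigenvalues on the
unit circle. -/
theorem palindromic_pencil_no_critical_eigenvalues_posDef
    (n : ℕ) (A B C D : Matrix (Fin n) (Fin n) ℝ)
    (hC : C.PosDef) (hB : B.PosDef)
    (hDA : IsUnit (D - Aᵀ)) :
    ∀ M : Matrix (Fin n ⊕ Fin n) (Fin n ⊕ Fin n) ℂ,
      M = (Matrix.fromBlocks C D A (-B)).map (Complex.ofReal ·) →
      (∃ z : ℂ, (M + z • Mᵀ).det ≠ 0) ∧
      ∀ z : ℂ, ‖z‖ = 1 → (M + z • Mᵀ).det ≠ 0 := by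
  intro M hM
  subst hM
  have main : ∀ z : ℂ, ‖z‖ = 1 →
      ((Matrix.fromBlocks C D A (-B)).map (Complex.ofReal ·)
        + z • ((Matrix.fromBlocks C D A (-B)).map (Complex.ofReal ·))ᵀ).det ≠ 0 := by
    intro z hz hdet
    obtain ⟨v, hvne, hv⟩ := Matrix.exists_mulVec_eq_zero_iff.mpr hdet
    exact hvne (key_inj A B C D hC hB hDA z hz v hv)
  exact ⟨⟨1, main 1 (by simp)⟩, main⟩
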